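/- The pseudo-gradient of the two-party game is not monotone: with ‖Q_A‖ = ‖Q_B‖ = 1, cos(ρ_A) = cos(ρ_B) = 0.6, ‖Q‖ = 1.2, and F(x,y) = (∂f/∂x, ∂g/∂y) as defined from the payoffs, the points z₁ = (0.49, 0.1) and z₂ = (0.1, 0.94) satisfy ⟨F(z₁) − F(z₂), z₁ − z₂⟩ > 0 (the 'wrong sign' for monotonicity of the ascent map; the game's pseudo-gradient F fails the monotonicity inequality ⟨F(u)−F(v), u−v⟩ ≤ 0). -/

import Mathlib

namespace CounterexampleMonotone

/-- Constants: `C₁ = C₂ = 0.6`, `D₀ = ‖Q‖/8 = 0.15`. -/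
noncomputable def C1 : ℝ := 0.6
noncomputable def C2 : ℝ := 0.6
noncomputable def D0 : ℝ := 0.15

/-- `K = C₁C₂ − √(1−C₁²)√(1−C₂²)`. -/
noncomputable def K : ℝ := C1 * C2 - Real.sqrt (1 - C1^2) * Real.sqrt (1 - C2^2)

/-- `L = √(1−C₁²)C₂ + C₁√(1−C₂²)`. -/
noncomputable def L : ℝ := Real.sqrt (1 - C1^2) * C2 + C1 * Real.sqrt (1 - C2^2)

/-- `M(t) = Kt + L√(1−t²)`. -/
noncomputable def M (t : ℝ) : ℝ := K * t + L * Real.sqrt (1 - t^2)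

/-- Winning probability. -/
noncomputable def pA (x y : ℝ) : ℝ :=
  1/2 + D0 * (C1 * x + Real.sqrt (1 - C1^2) * Real.sqrt (1 - x^2)
    - C2 * y - Real.sqrt (1 - C2^2) * Real.sqrt (1 - y^2))

noncomputable def dpdx (x : ℝ) : ℝ :=
  D0 * (C1 - Real.sqrt (1 - C1^2) * x / Real.sqrt (1 - x^2))

noncomputable def dpdy (y : ℝ) : ℝ :=
  D0 * (-C2 + Real.sqrt (1 - C2^2) * y / Real.sqrt (1 - y^2))

/-- Pseudo-gradient component for party A (with `‖Q_A‖ = 1`). -/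
noncomputable def F1 (x y : ℝ) : ℝ := pA x y + (x - M y) * dpdx x

/-- Pseudo-gradient component for party B (with `‖Q_B‖ = 1`). -/
noncomputable def F2 (x y : ℝ) : ℝ := (1 - pA x y) + (M x - y) * dpdy y

set_option maxHeartbeats 1600000 in
/-- The pseudo-gradient is not monotone: at `z₁ = (0.49, 0.1)` and
`z₂ = (0.1, 0.94)`, `⟨F(z₁) − F(z₂), z₁ − z₂⟩ > 0`, violating the monotonicity
inequality `⟨F(u) − F(v), u − v⟩ ≤ 0` for the ascent map. -/
theorem pseudo_gradient_not_monotone :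
    0 < (F1 0.49 0.1 - F1 0.1 0.94) * (0.49 - 0.1)
      + (F2 0.49 0.1 - F2 0.1 0.94) * (0.1 - 0.94) := by

  have h8 : Real.sqrt (1 - (0.6:ℝ)^2) = 0.8 := by
    rw [show (1 - (0.6:ℝ)^2 : ℝ) = 0.8^2 by norm_num]
    exact Real.sqrt_sq (by norm_num)
  have hap : 0 < Real.sqrt (1 - (0.49:ℝ)^2) := Real.sqrt_pos.2 (by norm_num)
  have hbp : 0 < Real.sqrt (1 - (0.1:ℝ)^2) := Real.sqrt_pos.2 (by norm_num)
  have hcp : 0 < Real.sqrt (1 - (0.94:ℝ)^2) := Real.sqrt_pos.2 (by norm_num)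
  set a := Real.sqrt (1 - (0.49:ℝ)^2) with haa
  set b := Real.sqrt (1 - (0.1:ℝ)^2) with hbb
  set c := Real.sqrt (1 - (0.94:ℝ)^2) with hcc
  have ha2 : a^2 = 0.7599 := by rw [haa, Real.sq_sqrt (by norm_num)]; norm_num
  have hb2 : b^2 = 0.99 := by rw [hbb, Real.sq_sqrt (by norm_num)]; norm_num
  have hc2 : c^2 = 0.1164 := by rw [hcc, Real.sq_sqrt (by norm_num)]; norm_num
  have hal : (0.87:ℝ) < a := by nlinarith
  have hau : a < 0.872 := by nlinarith
  have hbl : (0.994:ℝ) < b := by nlinarith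
  have hbu : b < 0.995 := by nlinarith
  have hcl : (0.341:ℝ) < c := by nlinarith
  have hcu : c < 0.3412 := by nlinarith
  have hai : a⁻¹ = a / 0.7599 := by
    field_simp; nlinarith [ha2]
  have hbi : b⁻¹ = b / 0.99 := by
    field_simp; nlinarith [hb2]
  have hci : c⁻¹ = c / 0.1164 := by
    field_simp; nlinarith [hc2]
  have hab : (0.86478:ℝ) < a * b := by nlinarith
  have hbc : (0.338954:ℝ) < b * c := by nlinarith
  simp only [F1, F2, pA, dpdx, dpdy, M, K, L, C1, C2, D0, h8,
    ← haa, ← hbb, ← hcc, div_eq_mul_inv, hai, hbi, hci]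
  nlinarith [hab, hbc]

end CounterexampleMonotone
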